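/- Let K be a field, α ∈ K((T⁻¹)), and A, B ∈ K[T] coprime non-zero polynomials; let β = (A/B)·α. Then α is badly approximable if and only if β is badly approximable, and in that case K(α) − deg(AB) ≤ K(β) ≤ K(α) + deg(AB). -/

import Mathlib

noncomputable section

namespace PaperCF

variable {K : Type*} [Field K]

/-- The element `T` of `K((T⁻¹))`, where `K((T⁻¹))` is modeled as the field
`LaurentSeries K` of Laurent series in the variable `t = T⁻¹`. -/
def Tvar (K : Type*) [Field K] : LaurentSeries K := (HahnSeries.single (-1 : ℤ) (1 : K))

/-- The embedding of `K[T]` into `K((T⁻¹))`, sending the polynomial variable to `T = t⁻¹`. -/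
def emb : Polynomial K →+* LaurentSeries K := (Polynomial.aeval (Tvar K)).toRingHom

/-- The polynomial part `⌊α⌋` of a formal Laurent series `α ∈ K((T⁻¹))`. -/
def polyPart (α : LaurentSeries K) : Polynomial K :=
  ∑ i ∈ Finset.range ((-α.order).toNat + 1), Polynomial.monomial i (α.coeff (-(i : ℤ)))

/-- The complete quotients `αₙ` of the regular continued fraction expansion of `α`
(with the convention `0⁻¹ = 0`, so that `cq α n = 0` for all `n` past the end of a
finite expansion). -/
def cq (α : LaurentSeries K) : ℕ → LaurentSeries K
  | 0 => α
  | n + 1 => (cq α n - emb (polyPart (cq α n)))⁻¹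

/-- The partial quotients `aₙ = ⌊αₙ⌋` of the regular continued fraction expansion of `α`. -/
def pq (α : LaurentSeries K) (n : ℕ) : Polynomial K := polyPart (cq α n)

/-- The continuants `(pₙ, qₙ)` of the regular continued fraction expansion of `α`. -/
def cont (α : LaurentSeries K) : ℕ → Polynomial K × Polynomial K
  | 0 => (pq α 0, 1)
  | 1 => (pq α 1 * pq α 0 + 1, pq α 1)
  | n + 2 => (pq α (n + 2) * (cont α (n + 1)).1 + (cont α n).1,
              pq α (n + 2) * (cont α (n + 1)).2 + (cont α n).2)

/-- `pₙ`. -/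
def contP (α : LaurentSeries K) (n : ℕ) : Polynomial K := (cont α n).1

/-- `qₙ`. -/
def contQ (α : LaurentSeries K) (n : ℕ) : Polynomial K := (cont α n).2

/-- The `n`-th partial quotient (and hence the `n`-th convergent) of `α` genuinely exists. -/
def ConvAt (α : LaurentSeries K) (n : ℕ) : Prop := n = 0 ∨ cq α n ≠ 0

/-- `K(α) = sup_{n ≥ 1} deg aₙ`, as an extended natural number. -/
def KK (α : LaurentSeries K) : ℕ∞ :=
  ⨆ n : {n : ℕ // 1 ≤ n ∧ cq α n ≠ 0}, ((pq α n.1).natDegree : ℕ∞)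

/-- `ōK(α) = limsup_n deg aₙ`. -/
def KKbar (α : LaurentSeries K) : ℕ∞ :=
  Filter.limsup (fun n => ((pq α n).natDegree : ℕ∞)) Filter.atTop

/-- `α` is a rational function, i.e. an element of `K(T) ⊆ K((T⁻¹))`. -/
def IsRat (α : LaurentSeries K) : Prop :=
  ∃ p q : Polynomial K, q ≠ 0 ∧ α * emb q = emb p

/-- Two Laurent series are equivalent if they differ by a Möbius transformation with
matrix in `GL₂(K[T])`. -/
def MEquiv (α β : LaurentSeries K) : Prop :=
  ∃ a b c d : Polynomial K, IsUnit (a * d - b * c) ∧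
    emb c * α + emb d ≠ 0 ∧ β = (emb a * α + emb b) / (emb c * α + emb d)

lemma Tvar_pow (n : ℕ) : (Tvar K) ^ n = HahnSeries.single (-(n:ℤ)) (1 : K) := by
  induction n with
  | zero => simp [Tvar]
  | succ n ih =>
    rw [pow_succ, ih, Tvar, HahnSeries.single_mul_single]
    norm_num [add_comm]

lemma emb_coeff (p : Polynomial K) (k : ℤ) :
    (emb p).coeff k = if k ≤ 0 then p.coeff (-k).toNat else 0 := by
  induction p using Polynomial.induction_on' with
  | add f g hf hg =>
    simp only [map_add, HahnSeries.coeff_add, hf, hg, Polynomial.coeff_add]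
    split <;> simp
  | monomial n a =>
    have : emb (Polynomial.monomial n a) = HahnSeries.single (-(n:ℤ)) a := by
      show (Polynomial.aeval (Tvar K)) (Polynomial.monomial n a) = _
      rw [Polynomial.aeval_monomial, Tvar_pow]
      have h1 : (algebraMap K (LaurentSeries K)) a = HahnSeries.single (0:ℤ) a := by
        simp [HahnSeries.algebraMap_apply', HahnSeries.ofPowerSeries_C, HahnSeries.C_apply,
          PowerSeries.algebraMap_apply]
      rw [h1, HahnSeries.single_mul_single]
      simp
    rw [this, HahnSeries.coeff_single, Polynomial.coeff_monomial]
    rcases le_or_gt k 0 with h | h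
    · simp only [h, if_true]
      by_cases hk : k = -(n:ℤ)
      · subst hk; simp
      · rw [if_neg hk, if_neg]
        intro hc
        apply hk
        omega
    · rw [if_neg (show ¬ (k = -(n:ℤ)) by omega), if_neg (not_le.mpr h)]

lemma emb_ne_zero {p : Polynomial K} (hp : p ≠ 0) : emb p ≠ 0 := by
  intro h
  have := emb_coeff p (-(p.natDegree : ℤ))
  rw [h] at this
  simp only [HahnSeries.coeff_zero] at this
  rw [if_pos (by omega)] at this
  simp only [neg_neg, Int.toNat_natCast] at this
  exact (Polynomial.leadingCoeff_ne_zero.mpr hp) this.symm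

lemma emb_order {p : Polynomial K} (hp : p ≠ 0) : (emb p).order = -(p.natDegree : ℤ) := by
  have hne := emb_ne_zero hp
  apply le_antisymm
  · apply HahnSeries.order_le_of_coeff_ne_zero
    rw [emb_coeff, if_pos (by omega)]
    simpa using Polynomial.leadingCoeff_ne_zero.mpr hp
  · rw [HahnSeries.order_of_ne hne]
    rw [Set.IsWF.le_min_iff]
    intro k hk
    by_contra hlt
    push_neg at hlt
    apply hk
    rw [emb_coeff]
    by_cases h0 : k ≤ 0
    · rw [if_pos h0]
      apply Polynomial.coeff_eq_zero_of_natDegree_lt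
      omega
    · rw [if_neg h0]

lemma emb_orderTop {p : Polynomial K} (hp : p ≠ 0) :
    (emb p).orderTop = (-(p.natDegree : ℤ) : ℤ) := by
  rw [← HahnSeries.order_eq_orderTop_of_ne_zero (emb_ne_zero hp), emb_order hp]

lemma polyPart_coeff (α : LaurentSeries K) (j : ℕ) :
    (polyPart α).coeff j = if j ≤ (-α.order).toNat then α.coeff (-(j:ℤ)) else 0 := by
  rw [polyPart, Polynomial.finset_sum_coeff]
  simp only [Polynomial.coeff_monomial]
  rw [Finset.sum_ite_eq' (Finset.range ((-α.order).toNat + 1)) j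
    (fun i => α.coeff (-(i : ℤ)))]
  simp only [Finset.mem_range, Nat.lt_succ_iff]

lemma polyPart_zero : polyPart (0 : LaurentSeries K) = 0 := by
  simp [polyPart]

lemma coeff_sub_polyPart (α : LaurentSeries K) (k : ℤ) (hk : k ≤ 0) :
    (α - emb (polyPart α)).coeff k = 0 := by
  have hc : (emb (polyPart α)).coeff k = α.coeff k := by
    rw [emb_coeff, if_pos hk, polyPart_coeff]
    split
    · next h => congr 1; omega
    · next h =>
      symm
      apply HahnSeries.coeff_eq_zero_of_lt_order
      have h2 : -α.order ≤ ((-α.order).toNat : ℤ) := Int.self_le_toNat _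
      omega
  rw [HahnSeries.coeff_sub, hc, sub_self]

lemma orderTop_pos_sub_polyPart (α : LaurentSeries K) :
    0 < (α - emb (polyPart α)).orderTop := by
  by_cases h : α - emb (polyPart α) = 0
  · rw [h, HahnSeries.orderTop_zero]; exact WithTop.coe_lt_top 0
  · rw [← HahnSeries.order_eq_orderTop_of_ne_zero h]
    rw [WithTop.coe_pos]  -- (0 : WithTop ℤ) < order
    by_contra hle
    push_neg at hle
    exact h (HahnSeries.coeff_order_eq_zero.mp (coeff_sub_polyPart α _ hle))

lemma polyPart_natDegree {α : LaurentSeries K} (hα : α ≠ 0) (h : α.order ≤ 0) :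
    (polyPart α).natDegree = (-α.order).toNat ∧ polyPart α ≠ 0 := by
  have hlead : (polyPart α).coeff (-α.order).toNat ≠ 0 := by
    rw [polyPart_coeff, if_pos le_rfl]
    have : -((-α.order).toNat : ℤ) = α.order := by omega
    rw [this]
    exact fun h0 => hα (HahnSeries.coeff_order_eq_zero.mp h0)
  constructor
  · apply le_antisymm
    · rw [Polynomial.natDegree_le_iff_coeff_eq_zero]
      intro N hN
      rw [polyPart_coeff, if_neg (by omega)]
    · exact Polynomial.le_natDegree_of_ne_zero hlead
  · intro h0
    rw [h0] at hlead
    simp at hlead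

def eps (α : LaurentSeries K) (n : ℕ) : LaurentSeries K := cq α n - emb (pq α n)

lemma cq_succ (α : LaurentSeries K) (n : ℕ) : cq α (n + 1) = (eps α n)⁻¹ := rfl

lemma eps_eq_inv (α : LaurentSeries K) (n : ℕ) : eps α n = (cq α (n + 1))⁻¹ := by
  rw [cq_succ, inv_inv]

lemma orderTop_eps_pos (α : LaurentSeries K) (n : ℕ) : 0 < (eps α n).orderTop :=
  orderTop_pos_sub_polyPart _

lemma order_eps_pos {α : LaurentSeries K} {n : ℕ} (h : eps α n ≠ 0) :
    1 ≤ (eps α n).order := by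
  have := orderTop_eps_pos α n
  rw [← HahnSeries.order_eq_orderTop_of_ne_zero h, WithTop.coe_pos] at this
  omega

lemma eps_ne_zero_of_cq_succ {α : LaurentSeries K} {n : ℕ} (h : cq α (n + 1) ≠ 0) :
    eps α n ≠ 0 := by
  intro h0
  rw [cq_succ, h0] at h
  simp at h

lemma cq_ne_zero_pred {α : LaurentSeries K} {n : ℕ} (h : cq α (n + 1) ≠ 0) :
    cq α n ≠ 0 := by
  intro h0
  apply h
  rw [cq_succ, eps, h0, pq, h0, polyPart_zero]
  simp

lemma cq_ne_zero_of_le {α : LaurentSeries K} {m n : ℕ} (hmn : m ≤ n) (h : cq α n ≠ 0) :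
    cq α m ≠ 0 := by
  induction n with
  | zero => rwa [Nat.le_zero.mp hmn]
  | succ n ih =>
    rcases Nat.eq_or_lt_of_le hmn with h1 | h1
    · rwa [h1]
    · exact ih (by omega) (cq_ne_zero_pred h)

lemma eps_ne_zero_of_lt {α : LaurentSeries K} {k n : ℕ} (hk : k < n) (h : cq α n ≠ 0) :
    eps α k ≠ 0 :=
  eps_ne_zero_of_cq_succ (cq_ne_zero_of_le hk h)

lemma order_cq_succ {α : LaurentSeries K} {n : ℕ} (h : eps α n ≠ 0) :
    (cq α (n + 1)).order = -(eps α n).order := by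
  rw [cq_succ]
  have h1 : (eps α n)⁻¹ ≠ 0 := inv_ne_zero h
  have := HahnSeries.order_mul h1 h
  rw [inv_mul_cancel₀ h, HahnSeries.order_one] at this
  omega

lemma pq_natDegree_succ {α : LaurentSeries K} {n : ℕ} (h : eps α n ≠ 0) :
    ((pq α (n + 1)).natDegree : ℤ) = (eps α n).order ∧ pq α (n + 1) ≠ 0 := by
  have h1 : cq α (n + 1) ≠ 0 := by rw [cq_succ]; exact inv_ne_zero h
  have h2 : (cq α (n + 1)).order ≤ 0 := by
    rw [order_cq_succ h]
    have := order_eps_pos h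
    omega
  obtain ⟨hd, hne⟩ := polyPart_natDegree h1 h2
  refine ⟨?_, hne⟩
  rw [pq, hd, order_cq_succ h]
  have := order_eps_pos h
  omega

lemma one_le_pq_natDegree_succ {α : LaurentSeries K} {n : ℕ} (h : eps α n ≠ 0) :
    1 ≤ (pq α (n + 1)).natDegree := by
  have := (pq_natDegree_succ h).1
  have := order_eps_pos h
  omega

lemma contP_zero (α : LaurentSeries K) : contP α 0 = pq α 0 := rfl

lemma contQ_zero (α : LaurentSeries K) : contQ α 0 = 1 := rfl

lemma contP_one (α : LaurentSeries K) : contP α 1 = pq α 1 * pq α 0 + 1 := rfl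

lemma contQ_one (α : LaurentSeries K) : contQ α 1 = pq α 1 := rfl

lemma contP_two (α : LaurentSeries K) (n : ℕ) :
    contP α (n + 2) = pq α (n + 2) * contP α (n + 1) + contP α n := rfl

lemma contQ_two (α : LaurentSeries K) (n : ℕ) :
    contQ α (n + 2) = pq α (n + 2) * contQ α (n + 1) + contQ α n := rfl

lemma det_cont (α : LaurentSeries K) (n : ℕ) :
    contP α (n + 1) * contQ α n - contP α n * contQ α (n + 1) = (-1) ^ n := by
  induction n with
  | zero => rw [contP_one, contQ_zero, contP_zero, contQ_one]; ring
  | succ n ih =>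
    rw [contP_two, contQ_two]
    have : pq α (n + 2) * contP α (n + 1) * contQ α (n + 1) +
        contP α n * contQ α (n + 1) -
        contP α (n + 1) * (pq α (n + 2) * contQ α (n + 1) + contQ α n)
        = -(contP α (n+1) * contQ α n - contP α n * contQ α (n+1)) := by ring
    rw [show pq α (n + 2) * contP α (n + 1) + contP α n =
      pq α (n + 2) * contP α (n + 1) + contP α n from rfl]
    calc (pq α (n + 2) * contP α (n + 1) + contP α n) * contQ α (n + 1) -
        contP α (n + 1) * (pq α (n + 2) * contQ α (n + 1) + contQ α n)
        = -(contP α (n+1) * contQ α n - contP α n * contQ α (n+1)) := by ring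
      _ = (-1)^(n+1) := by rw [ih]; ring

def Rres (α : LaurentSeries K) (n : ℕ) : LaurentSeries K :=
  α * emb (contQ α n) - emb (contP α n)

lemma eps_mul_succ {α : LaurentSeries K} {n : ℕ} (h : eps α n ≠ 0) :
    eps α n * eps α (n + 1) = 1 - emb (pq α (n + 1)) * eps α n := by
  have h1 : eps α n * cq α (n + 1) = 1 := by
    rw [cq_succ]; exact mul_inv_cancel₀ h
  have e : eps α (n+1) = cq α (n+1) - emb (pq α (n+1)) := rfl
  rw [e, mul_sub, h1]
  ring

lemma key1 (α : LaurentSeries K) (n : ℕ) (h : ∀ k < n, eps α k ≠ 0) :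
    Rres α n = (-1 : LaurentSeries K) ^ n * ∏ k ∈ Finset.range (n + 1), eps α k := by
  induction n using Nat.twoStepInduction with
  | zero =>
    rw [pow_zero, one_mul, Finset.prod_range_one, Rres, contQ_zero, contP_zero,
      map_one, mul_one]
    rfl
  | one =>
    have h0 : eps α 0 ≠ 0 := h 0 (by omega)
    have hm := eps_mul_succ h0
    rw [Finset.prod_range_succ, Finset.prod_range_one, Rres, contQ_one, contP_one,
      map_add, map_mul, map_one, pow_one]
    have e0 : α - emb (pq α 0) = eps α 0 := rfl
    calc α * emb (pq α 1) - (emb (pq α 1) * emb (pq α 0) + 1)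
        = emb (pq α 1) * (α - emb (pq α 0)) - 1 := by ring
      _ = emb (pq α 1) * eps α 0 - 1 := by rw [e0]
      _ = -1 * (eps α 0 * eps α 1) := by rw [hm]; ring
  | more n ih1 ih2 =>
    have h1 : ∀ k < n, eps α k ≠ 0 := fun k hk => h k (by omega)
    have h2 : ∀ k < n + 1, eps α k ≠ 0 := fun k hk => h k (by omega)
    have hn1 : eps α (n + 1) ≠ 0 := h (n + 1) (by omega)
    have hm := eps_mul_succ hn1
    have e1 : Rres α (n + 2) = emb (pq α (n + 2)) * Rres α (n + 1) + Rres α n := by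
      simp only [Rres, contP_two, contQ_two, map_add, map_mul]
      ring
    rw [e1, ih1 h1, ih2 h2,
      Finset.prod_range_succ (f := fun k => eps α k) (n := n + 2),
      Finset.prod_range_succ (f := fun k => eps α k) (n := n + 1)]
    have hm' : eps α (n + 1) * eps α (n + 2) = 1 - emb (pq α (n + 2)) * eps α (n + 1) := by
      rw [show n + 2 = n + 1 + 1 from rfl]
      exact hm
    calc emb (pq α (n + 2)) *
          ((-1) ^ (n + 1) * ((∏ k ∈ Finset.range (n + 1), eps α k) * eps α (n + 1)))
          + (-1) ^ n * ∏ k ∈ Finset.range (n + 1), eps α k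
        = (-1) ^ n * (∏ k ∈ Finset.range (n + 1), eps α k) *
            (1 - emb (pq α (n + 2)) * eps α (n + 1)) := by ring
      _ = (-1) ^ n * (∏ k ∈ Finset.range (n + 1), eps α k) *
            (eps α (n + 1) * eps α (n + 2)) := by rw [hm']
      _ = (-1) ^ (n + 2) *
            ((∏ k ∈ Finset.range (n + 1), eps α k) * eps α (n + 1) * eps α (n + 2)) := by ring

lemma contQ_degree (α : LaurentSeries K) (n : ℕ) (h : ∀ k < n, eps α k ≠ 0) :
    (contQ α n).degree = ((∑ k ∈ Finset.range n, (pq α (k + 1)).natDegree : ℕ) : WithBot ℕ) := by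
  induction n using Nat.twoStepInduction with
  | zero => simp [contQ_zero]
  | one =>
    have h0 : eps α 0 ≠ 0 := h 0 (by omega)
    rw [contQ_one, Finset.sum_range_one, Polynomial.degree_eq_natDegree (pq_natDegree_succ h0).2]
  | more n ih1 ih2 =>
    have h1 : ∀ k < n, eps α k ≠ 0 := fun k hk => h k (by omega)
    have h2 : ∀ k < n + 1, eps α k ≠ 0 := fun k hk => h k (by omega)
    have hn1 : eps α (n + 1) ≠ 0 := h (n + 1) (by omega)
    have hpq := pq_natDegree_succ hn1
    rw [contQ_two]
    have hmono : ∀ m1 m2 : ℕ, m1 ≤ m2 →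
        (∑ k ∈ Finset.range m1, (pq α (k + 1)).natDegree) ≤
        (∑ k ∈ Finset.range m2, (pq α (k + 1)).natDegree) :=
      fun m1 m2 hm => Finset.sum_le_sum_of_subset (Finset.range_subset_range.mpr hm)
    have hdeg1 : (pq α (n + 2) * contQ α (n + 1)).degree =
        (((pq α (n + 2)).natDegree + ∑ k ∈ Finset.range (n + 1), (pq α (k + 1)).natDegree : ℕ) : WithBot ℕ) := by
      rw [Polynomial.degree_mul, ih2 h2,
        Polynomial.degree_eq_natDegree (show pq α (n + 2) ≠ 0 by exact hpq.2)]
      push_cast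
      ring
    have hlt : (contQ α n).degree < (pq α (n + 2) * contQ α (n + 1)).degree := by
      rw [hdeg1, ih1 h1]
      rw [Nat.cast_lt]
      have hd1 : 1 ≤ (pq α (n + 2)).natDegree := one_le_pq_natDegree_succ hn1
      have := hmono n (n + 1) (by omega)
      omega
    rw [Polynomial.degree_add_eq_left_of_degree_lt hlt, hdeg1]
    congr 1
    rw [Finset.sum_range_succ (n := n + 1)]
    ring

lemma contQ_ne_zero (α : LaurentSeries K) (n : ℕ) (h : ∀ k < n, eps α k ≠ 0) :
    contQ α n ≠ 0 := by
  intro h0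
  have h1 := contQ_degree α n h
  rw [Polynomial.degree_eq_bot.mpr h0] at h1
  exact WithBot.coe_ne_bot h1.symm

lemma contQ_natDegree (α : LaurentSeries K) (n : ℕ) (h : ∀ k < n, eps α k ≠ 0) :
    (contQ α n).natDegree = ∑ k ∈ Finset.range n, (pq α (k + 1)).natDegree :=
  Polynomial.natDegree_eq_of_degree_eq_some (contQ_degree α n h)

lemma prod_eps_order (α : LaurentSeries K) (m : ℕ) (h : ∀ k < m, eps α k ≠ 0) :
    (∏ k ∈ Finset.range m, eps α k) ≠ 0 ∧
    (∏ k ∈ Finset.range m, eps α k).order = ∑ k ∈ Finset.range m, (eps α k).order := by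
  induction m with
  | zero => simp [HahnSeries.order_one]
  | succ m ih =>
    obtain ⟨hne, hord⟩ := ih (fun k hk => h k (by omega))
    have hm : eps α m ≠ 0 := h m (by omega)
    constructor
    · rw [Finset.prod_range_succ]
      exact mul_ne_zero hne hm
    · rw [Finset.prod_range_succ, HahnSeries.order_mul hne hm, hord,
        Finset.sum_range_succ]

lemma neg_one_pow_order_zero (n : ℕ) :
    ((-1 : LaurentSeries K) ^ n).order = 0 ∧ ((-1 : LaurentSeries K) ^ n) ≠ 0 := by
  have hne : ∀ m : ℕ, ((-1 : LaurentSeries K) ^ m) ≠ 0 :=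
    fun m => pow_ne_zero _ (neg_ne_zero.mpr one_ne_zero)
  refine ⟨?_, hne n⟩
  induction n with
  | zero => rw [pow_zero, HahnSeries.order_one]
  | succ n ih =>
    rw [pow_succ, HahnSeries.order_mul (hne n) (neg_ne_zero.mpr one_ne_zero), ih,
      HahnSeries.order_neg, HahnSeries.order_one, add_zero]

lemma Rres_order (α : LaurentSeries K) (n : ℕ) (h : ∀ k < n + 1, eps α k ≠ 0) :
    Rres α n ≠ 0 ∧ (Rres α n).order = ((contQ α (n + 1)).natDegree : ℤ) := by
  have h' : ∀ k < n, eps α k ≠ 0 := fun k hk => h k (by omega)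
  obtain ⟨hprodne, hprodord⟩ := prod_eps_order α (n + 1) h
  obtain ⟨hu, hune⟩ := neg_one_pow_order_zero (K := K) n
  have hkey := key1 α n h'
  have hne : Rres α n ≠ 0 := by rw [hkey]; exact mul_ne_zero hune hprodne
  refine ⟨hne, ?_⟩
  rw [hkey, HahnSeries.order_mul hune hprodne, hu, hprodord, zero_add]
  rw [contQ_natDegree α (n + 1) h]
  push_cast
  apply Finset.sum_congr rfl
  intro k hk
  rw [Finset.mem_range] at hk
  exact ((pq_natDegree_succ (h k hk)).1).symm

lemma sum_deg_ge (α : LaurentSeries K) (m : ℕ) (h : ∀ k < m, eps α k ≠ 0) :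
    m ≤ ∑ k ∈ Finset.range m, (pq α (k + 1)).natDegree := by
  calc m = ∑ _k ∈ Finset.range m, 1 := by simp
    _ ≤ _ := Finset.sum_le_sum
        (fun k hk => one_le_pq_natDegree_succ (h k (Finset.mem_range.mp hk)))

lemma order_le_of_pq_bound (α : LaurentSeries K) (C : ℕ)
    (hC : ∀ n : ℕ, cq α (n + 1) ≠ 0 → (pq α (n + 1)).natDegree ≤ C)
    (p q : Polynomial K) (hq : q ≠ 0) (hD : α * emb q - emb p ≠ 0) :
    (α * emb q - emb p).order ≤ (q.natDegree : ℤ) + C := by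
  have hex : ∃ n, ¬ (eps α n ≠ 0 ∧ (contQ α (n + 1)).natDegree ≤ q.natDegree) := by
    by_contra hall
    push_neg at hall
    have hall' : ∀ k < q.natDegree + 1, eps α k ≠ 0 := fun k _ => (hall k).1
    have hge := sum_deg_ge α (q.natDegree + 1) hall'
    rw [← contQ_natDegree α (q.natDegree + 1) hall'] at hge
    have := (hall q.natDegree).2
    omega
  classical
  set N := Nat.find hex with hNdef
  have hNot : ¬ (eps α N ≠ 0 ∧ (contQ α (N + 1)).natDegree ≤ q.natDegree) :=
    Nat.find_spec hex
  have hmin : ∀ k < N, eps α k ≠ 0 ∧ (contQ α (k + 1)).natDegree ≤ q.natDegree :=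
    fun k hk => not_not.mp (Nat.find_min hex hk)
  have hN1 : ∀ k < N, eps α k ≠ 0 := fun k hk => (hmin k hk).1
  have hQN : (contQ α N).natDegree ≤ q.natDegree := by
    rcases Nat.eq_zero_or_eq_succ_pred N with h0 | hsu
    · rw [h0, contQ_zero, Polynomial.natDegree_one]
      omega
    · rw [hsu]
      exact (hmin (N - 1) (by omega)).2
  by_cases heps : eps α N = 0
  -- Case: the expansion terminates at N; α = P_N / Q_N exactly.
  · have hR0 : Rres α N = 0 := by
      rw [key1 α N hN1, Finset.prod_eq_zero (Finset.self_mem_range_succ N) heps, mul_zero]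
    have hQne : contQ α N ≠ 0 := contQ_ne_zero α N hN1
    have hofeq : α * emb (contQ α N) = emb (contP α N) :=
      sub_eq_zero.mp (show α * emb (contQ α N) - emb (contP α N) = 0 from hR0)
    set W := q * contP α N - p * contQ α N with hW
    have hembW : emb W = (α * emb q - emb p) * emb (contQ α N) := by
      rw [hW, map_sub, map_mul, map_mul, ← hofeq]
      ring
    have hWne : W ≠ 0 := by
      intro h0
      rw [h0, map_zero] at hembW
      exact (mul_ne_zero hD (emb_ne_zero hQne)) hembW.symm
    have horder := HahnSeries.order_mul hD (emb_ne_zero hQne)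
    rw [← hembW, emb_order hWne, emb_order hQne] at horder
    have hWd : (0 : ℤ) ≤ (W.natDegree : ℤ) := Int.natCast_nonneg _
    omega
  -- Case: there is a convergent with denominator degree straddling deg q.
  · have hdQ : q.natDegree < (contQ α (N + 1)).natDegree := by
      rcases not_and_or.mp hNot with h | h
      · exact absurd (not_not.mp h) heps
      · exact not_le.mp h
    have hN1' : ∀ k < N + 1, eps α k ≠ 0 := by
      intro k hk
      rcases Nat.lt_succ_iff_lt_or_eq.mp hk with h | h
      · exact hN1 k h
      · rw [h]; exact heps
    have hcq : cq α (N + 1) ≠ 0 := by rw [cq_succ]; exact inv_ne_zero heps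
    have hdC : (pq α (N + 1)).natDegree ≤ C := hC N hcq
    have hQQ : (contQ α (N + 1)).natDegree
        = (contQ α N).natDegree + (pq α (N + 1)).natDegree := by
      rw [contQ_natDegree α (N + 1) hN1', contQ_natDegree α N hN1, Finset.sum_range_succ]
    obtain ⟨hRNne, hRNord⟩ := Rres_order α N hN1'
    set x := (-1 : Polynomial K) ^ N * (q * contP α (N + 1) - p * contQ α (N + 1)) with hx
    set y := (-1 : Polynomial K) ^ N * (p * contQ α N - q * contP α N) with hy
    have hdet := det_cont α N
    have hsq : ((-1 : Polynomial K) ^ N) * ((-1 : Polynomial K) ^ N) = 1 := by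
      rw [← pow_add]
      exact Even.neg_one_pow ⟨N, rfl⟩
    have hq_lin : q = x * contQ α N + y * contQ α (N + 1) := by
      rw [hx, hy]
      linear_combination (-((-1 : Polynomial K) ^ N) * q) * hdet + (-q) * hsq
    have hp_lin : p = x * contP α N + y * contP α (N + 1) := by
      rw [hx, hy]
      linear_combination (-((-1 : Polynomial K) ^ N) * p) * hdet + (-p) * hsq
    have hQ1ne : contQ α (N + 1) ≠ 0 := contQ_ne_zero α (N + 1) hN1'
    have hQNne : contQ α N ≠ 0 := contQ_ne_zero α N hN1
    have hxne : x ≠ 0 := by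
      intro h0
      rw [h0, zero_mul, zero_add] at hq_lin
      have hyne : y ≠ 0 := by
        intro hy0
        rw [hy0, zero_mul] at hq_lin
        exact hq hq_lin
      have hdm := Polynomial.natDegree_mul hyne hQ1ne
      rw [← hq_lin] at hdm
      omega
    have hDeq : α * emb q - emb p = emb x * Rres α N + emb y * Rres α (N + 1) := by
      simp only [Rres]
      calc α * emb q - emb p
          = α * emb (x * contQ α N + y * contQ α (N + 1))
            - emb (x * contP α N + y * contP α (N + 1)) := by rw [← hq_lin, ← hp_lin]
        _ = emb x * (α * emb (contQ α N) - emb (contP α N))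
            + emb y * (α * emb (contQ α (N + 1)) - emb (contP α (N + 1))) := by
            simp only [map_add, map_mul]
            ring
    have hxtermne : emb x * Rres α N ≠ 0 := mul_ne_zero (emb_ne_zero hxne) hRNne
    have hordx : (emb x * Rres α N).order
        = -(x.natDegree : ℤ) + (contQ α (N + 1)).natDegree := by
      rw [HahnSeries.order_mul (emb_ne_zero hxne) hRNne, emb_order hxne, hRNord]
    have hcmp : (emb x * Rres α N).orderTop < (emb y * Rres α (N + 1)).orderTop := by
      have hxlt : (emb x * Rres α N).orderTop ≠ ⊤ :=
        HahnSeries.orderTop_ne_top.mpr hxtermne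
      by_cases hyne : y = 0
      · rw [hyne, map_zero, zero_mul, HahnSeries.orderTop_zero]
        exact lt_top_iff_ne_top.mpr hxlt
      by_cases hR1 : eps α (N + 1) = 0
      · have hz : Rres α (N + 1) = 0 := by
          rw [key1 α (N + 1) hN1',
            Finset.prod_eq_zero (Finset.self_mem_range_succ (N + 1)) hR1, mul_zero]
        rw [hz, mul_zero, HahnSeries.orderTop_zero]
        exact lt_top_iff_ne_top.mpr hxlt
      have hN2' : ∀ k < N + 2, eps α k ≠ 0 := by
        intro k hk
        rcases Nat.lt_succ_iff_lt_or_eq.mp hk with h | h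
        · exact hN1' k h
        · rw [h]; exact hR1
      obtain ⟨hR1ne, hR1ord⟩ := Rres_order α (N + 1) hN2'
      have hytermne : emb y * Rres α (N + 1) ≠ 0 := mul_ne_zero (emb_ne_zero hyne) hR1ne
      have hordy : (emb y * Rres α (N + 1)).order
          = -(y.natDegree : ℤ) + (contQ α (N + 2)).natDegree := by
        rw [HahnSeries.order_mul (emb_ne_zero hyne) hR1ne, emb_order hyne, hR1ord]
      -- degree comparison: deg x = deg y + deg a_{N+1}
      have hsub : x * contQ α N = q - y * contQ α (N + 1) := by linear_combination -hq_lin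
      have hdeglt : q.degree < (y * contQ α (N + 1)).degree := by
        rw [Polynomial.degree_mul, Polynomial.degree_eq_natDegree hyne,
          Polynomial.degree_eq_natDegree hQ1ne, Polynomial.degree_eq_natDegree hq,
          ← Nat.cast_add, Nat.cast_lt]
        omega
      have hdege : (x * contQ α N).degree = (y * contQ α (N + 1)).degree := by
        rw [hsub, Polynomial.degree_sub_eq_right_of_degree_lt hdeglt]
      have hnde : x.natDegree + (contQ α N).natDegree
          = y.natDegree + (contQ α (N + 1)).natDegree := by
        have := Polynomial.natDegree_eq_of_degree_eq hdege
        rwa [Polynomial.natDegree_mul hxne hQNne,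
          Polynomial.natDegree_mul hyne hQ1ne] at this
      have hQQ2 : (contQ α (N + 2)).natDegree
          = (contQ α (N + 1)).natDegree + (pq α (N + 2)).natDegree := by
        rw [contQ_natDegree α (N + 2) hN2', contQ_natDegree α (N + 1) hN1',
          Finset.sum_range_succ]
      have hd2 : 1 ≤ (pq α (N + 2)).natDegree := one_le_pq_natDegree_succ hR1
      rw [← HahnSeries.order_eq_orderTop_of_ne_zero hxtermne,
        ← HahnSeries.order_eq_orderTop_of_ne_zero hytermne, WithTop.coe_lt_coe, hordx, hordy]
      omega
    have horderTopD : (α * emb q - emb p).orderTop = (emb x * Rres α N).orderTop := by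
      rw [hDeq]
      exact HahnSeries.orderTop_add_eq_left hcmp
    rw [← HahnSeries.order_eq_orderTop_of_ne_zero hD,
      ← HahnSeries.order_eq_orderTop_of_ne_zero hxtermne, WithTop.coe_inj] at horderTopD
    rw [horderTopD, hordx]
    omega

lemma pq_bound_of_order_le (α : LaurentSeries K) (C : ℕ)
    (hBA : ∀ p q : Polynomial K, q ≠ 0 → α * emb q - emb p ≠ 0 →
      (α * emb q - emb p).order ≤ (q.natDegree : ℤ) + C) :
    ∀ n : ℕ, cq α (n + 1) ≠ 0 → (pq α (n + 1)).natDegree ≤ C := by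
  intro n hcq
  have hN1' : ∀ k < n + 1, eps α k ≠ 0 := fun k hk => eps_ne_zero_of_lt hk hcq
  have hN1 : ∀ k < n, eps α k ≠ 0 := fun k hk => hN1' k (by omega)
  obtain ⟨hRne, hRord⟩ := Rres_order α n hN1'
  have hQne : contQ α n ≠ 0 := contQ_ne_zero α n hN1
  have hR : α * emb (contQ α n) - emb (contP α n) = Rres α n := rfl
  have := hBA (contP α n) (contQ α n) hQne (hR ▸ hRne)
  rw [hR, hRord] at this
  have hQQ : (contQ α (n + 1)).natDegree
      = (contQ α n).natDegree + (pq α (n + 1)).natDegree := by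
    rw [contQ_natDegree α (n + 1) hN1', contQ_natDegree α n hN1, Finset.sum_range_succ]
  omega

lemma KK_le_iff (α : LaurentSeries K) (C : ℕ) :
    KK α ≤ (C : ℕ∞) ↔ ∀ n : ℕ, cq α (n + 1) ≠ 0 → (pq α (n + 1)).natDegree ≤ C := by
  constructor
  · intro h n hn
    have hle : ((pq α (n + 1)).natDegree : ℕ∞) ≤ C :=
      le_trans (le_iSup (fun m : {m : ℕ // 1 ≤ m ∧ cq α m ≠ 0} =>
        ((pq α m.1).natDegree : ℕ∞)) ⟨n + 1, by omega, hn⟩) h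
    exact_mod_cast hle
  · intro h
    apply iSup_le
    rintro ⟨m, hm1, hm2⟩
    obtain ⟨k, rfl⟩ : ∃ k, m = k + 1 := ⟨m - 1, by omega⟩
    exact_mod_cast h k hm2

lemma KK_ne_top_iff (α : LaurentSeries K) : KK α ≠ ⊤ ↔ ∃ C : ℕ, KK α ≤ (C : ℕ∞) := by
  constructor
  · intro h
    exact ⟨(KK α).toNat, le_of_eq (ENat.coe_toNat h).symm⟩
  · rintro ⟨C, hC⟩
    exact ne_top_of_le_ne_top (by simp) hC

lemma beta_eq (α : LaurentSeries K) {A B : Polynomial K} (hA : A ≠ 0) (hB : B ≠ 0) :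
    emb B * (emb A / emb B * α) = emb A * α := by
  have hBe : emb B ≠ (0 : LaurentSeries K) := emb_ne_zero hB
  field_simp

lemma KK_transfer (α : LaurentSeries K) (A B : Polynomial K) (hA : A ≠ 0) (hB : B ≠ 0)
    (C : ℕ) (h : KK α ≤ (C : ℕ∞)) :
    KK (emb A / emb B * α) ≤ ((C + A.natDegree + B.natDegree : ℕ) : ℕ∞) := by
  set β := emb A / emb B * α with hβ
  rw [KK_le_iff] at h ⊢
  apply pq_bound_of_order_le
  intro p q hq hD
  have hAe : emb A ≠ (0 : LaurentSeries K) := emb_ne_zero hA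
  have hBe : emb B ≠ (0 : LaurentSeries K) := emb_ne_zero hB
  have hkey : emb B * (β * emb q - emb p) = α * emb (A * q) - emb (B * p) := by
    rw [mul_sub, ← mul_assoc, hβ, beta_eq α hA hB, map_mul, map_mul]
    ring
  have hD' : α * emb (A * q) - emb (B * p) ≠ 0 := by
    rw [← hkey]
    exact mul_ne_zero hBe hD
  have hord := order_le_of_pq_bound α C h (B * p) (A * q) (mul_ne_zero hA hq) hD'
  have horder2 : (emb B).order + (β * emb q - emb p).order
      = (α * emb (A * q) - emb (B * p)).order := by
    rw [← hkey]
    exact (HahnSeries.order_mul hBe hD).symm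
  rw [emb_order hB] at horder2
  rw [Polynomial.natDegree_mul hA hq] at hord
  push_cast at hord ⊢
  omega

end PaperCF

open PaperCF in
/-- For coprime non-zero `A, B ∈ K[T]` and `β = (A/B)·α`: `α` is badly
approximable iff `β` is, and in that case
`K(α) − deg(AB) ≤ K(β) ≤ K(α) + deg(AB)`. -/
theorem badly_approximable_mul_rational {K : Type*} [Field K]
    (α : LaurentSeries K) (A B : Polynomial K) (hA : A ≠ 0) (hB : B ≠ 0)
    (hAB : IsCoprime A B) :
    (KK α ≠ ⊤ ↔ KK (emb A / emb B * α) ≠ ⊤) ∧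
    (KK α ≠ ⊤ →
      KK α - ((A * B).natDegree : ℕ∞) ≤ KK (emb A / emb B * α) ∧
      KK (emb A / emb B * α) ≤ KK α + ((A * B).natDegree : ℕ∞)) := by
  have hAe : emb A ≠ (0 : LaurentSeries K) := emb_ne_zero hA
  have hBe : emb B ≠ (0 : LaurentSeries K) := emb_ne_zero hB
  have hrec : emb B / emb A * (emb A / emb B * α) = α := by
    field_simp
  have dir1 : ∀ C : ℕ, KK α ≤ (C : ℕ∞) →
      KK (emb A / emb B * α) ≤ ((C + A.natDegree + B.natDegree : ℕ) : ℕ∞) :=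
    fun C h => KK_transfer α A B hA hB C h
  have dir2 : ∀ C : ℕ, KK (emb A / emb B * α) ≤ (C : ℕ∞) →
      KK α ≤ ((C + B.natDegree + A.natDegree : ℕ) : ℕ∞) := by
    intro C h
    have := KK_transfer (emb A / emb B * α) B A hB hA C h
    rwa [hrec] at this
  have hiff : KK α ≠ ⊤ ↔ KK (emb A / emb B * α) ≠ ⊤ := by
    constructor
    · intro h
      rw [KK_ne_top_iff] at h ⊢
      obtain ⟨C, hC⟩ := h
      exact ⟨_, dir1 C hC⟩
    · intro h
      rw [KK_ne_top_iff] at h ⊢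
      obtain ⟨C, hC⟩ := h
      exact ⟨_, dir2 C hC⟩
  refine ⟨hiff, fun hα => ?_⟩
  have hβ : KK (emb A / emb B * α) ≠ ⊤ := hiff.mp hα
  have hd : ((A * B).natDegree : ℕ∞) = (A.natDegree : ℕ∞) + (B.natDegree : ℕ∞) := by
    rw [Polynomial.natDegree_mul hA hB]
    push_cast
    rfl
  constructor
  · rw [tsub_le_iff_right]
    have h2 := dir2 (KK (emb A / emb B * α)).toNat
      (le_of_eq (ENat.coe_toNat hβ).symm)
    calc KK α ≤ (((KK (emb A / emb B * α)).toNat + B.natDegree + A.natDegree : ℕ) : ℕ∞) := h2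
      _ = KK (emb A / emb B * α) + ((A * B).natDegree : ℕ∞) := by
          rw [hd]
          push_cast
          rw [ENat.coe_toNat hβ]
          ring
  · have h1 := dir1 (KK α).toNat (le_of_eq (ENat.coe_toNat hα).symm)
    calc KK (emb A / emb B * α)
        ≤ (((KK α).toNat + A.natDegree + B.natDegree : ℕ) : ℕ∞) := h1
      _ = KK α + ((A * B).natDegree : ℕ∞) := by
          rw [hd]
          push_cast
          rw [ENat.coe_toNat hα]
          ring
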